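/- arXiv:1405.3069 — 2 statements merged into one kernel-verified Lean document; each statement's English description precedes it below -/
import Mathlib

section
/- For every k > 0, let G_k = ({X_0, …, X_k}, {a}, Δ_k) with Δ_k = { X_i → X_{i−1} X_{i−1} | 1 ≤ i ≤ k } ∪ { X_0 → a }. Then: (1) L_{X_k}(G_k) = { a^{2^k} }; (2) there is exactly one control word γ ∈ Δ_k* such that X_k ⇒^γ a^{2^k} is a depth-first derivation of G_k, and this γ has length |γ| ≥ 2^k; (3) every depth-first derivation of a^{2^k} from X_k in G_k is of index exactly k+1 (it is (k+1)-index but not k-index). -/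
namespace Paper

/-- A word over nonterminals `N` and terminals `T`. -/
abbrev Word (N T : Type) := List (N ⊕ T)

/-- A production of a grammar. -/
abbrev CProd (N T : Type) := N × Word N T

/-- A grammar, given by its set of productions. -/
structure CFG (N T : Type) where
  prods : Set (CProd N T)

variable {N T : Type}

/-- number of occurrences of nonterminals in a word -/
def ntCount (u : Word N T) : ℕ := (u.filter (fun s => s.isLeft)).length

/-- number of occurrences of terminals in a word -/
def tCount (u : Word N T) : ℕ := (u.filter (fun s => s.isRight)).length

/-- the result of applying production `p` at position `j` of `u` -/
def applyProd (p : CProd N T) (j : ℕ) (u : Word N T) : Word N T :=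
  u.take j ++ p.2 ++ u.drop (j + 1)

/-- `KSeq G k u γjs v`: a step sequence from `u` to `v` applying the indicated
productions at the indicated positions, in which every word (including `u`, `v`)
has at most `k` occurrences of nonterminals (`k = ⊤` places no restriction). -/
inductive KSeq (G : CFG N T) (k : ℕ∞) : Word N T → List (CProd N T × ℕ) → Word N T → Prop
  | refl (u : Word N T) : (ntCount u : ℕ∞) ≤ k → KSeq G k u [] u
  | step {u v : Word N T} {p : CProd N T} {j : ℕ} {rest : List (CProd N T × ℕ)} :
      (ntCount u : ℕ∞) ≤ k → p ∈ G.prods → u[j]? = some (Sum.inl p.1) →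
      KSeq G k (applyProd p j u) rest v → KSeq G k u ((p, j) :: rest) v

/-- words annotated with the index of the step at which each symbol occurrence appeared -/
abbrev AWord (N T : Type) := List ((N ⊕ T) × ℕ)

def strip (u : AWord N T) : Word N T := u.map Prod.fst

def ntCountA (u : AWord N T) : ℕ := (u.filter (fun s => s.1.isLeft)).length

def applyProdA (p : CProd N T) (j m : ℕ) (u : AWord N T) : AWord N T :=
  u.take j ++ p.2.map (fun s => (s, m)) ++ u.drop (j + 1)

/-- the depth-first condition: position `j` carries a maximal first-appearance
index among the nonterminal occurrences of `u` -/
def dfOK (u : AWord N T) (j : ℕ) : Prop :=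
  ∀ i x o, u[(i : ℕ)]? = some (Sum.inl x, o) → ∀ s oj, u[j]? = some (s, oj) → o ≤ oj

/-- `DFSeq G k m u γjs v`: a `k`-index depth-first step sequence on annotated words,
where `m` is the index (in the whole sequence) of the current word `u`. -/
inductive DFSeq (G : CFG N T) (k : ℕ∞) : ℕ → AWord N T → List (CProd N T × ℕ) → AWord N T → Prop
  | refl (m : ℕ) (u : AWord N T) : (ntCountA u : ℕ∞) ≤ k → DFSeq G k m u [] u
  | step {m : ℕ} {u v : AWord N T} {p : CProd N T} {j o : ℕ} {rest : List (CProd N T × ℕ)} :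
      (ntCountA u : ℕ∞) ≤ k → p ∈ G.prods → u[j]? = some (Sum.inl p.1, o) →
      dfOK u j →
      DFSeq G k (m + 1) (applyProdA p j (m + 1) u) rest v →
      DFSeq G k m u ((p, j) :: rest) v

/-- `u ⇒^γ v` by a `k`-index step sequence (positions existentially quantified). -/
def CtrlSeq (G : CFG N T) (k : ℕ∞) (u : Word N T) (γ : List (CProd N T)) (v : Word N T) : Prop :=
  ∃ js : List ℕ, js.length = γ.length ∧ KSeq G k u (γ.zip js) v

/-- annotate a word as an initial word of a step sequence -/
def annot (u : Word N T) : AWord N T := u.map (fun s => (s, 0))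

/-- `u ⇒^γ v` by a `k`-index depth-first step sequence starting at `u`. -/
def DFCtrlFrom (G : CFG N T) (k : ℕ∞) (u : Word N T) (γ : List (CProd N T)) (v : Word N T) :
    Prop :=
  ∃ (js : List ℕ) (va : AWord N T),
    js.length = γ.length ∧ DFSeq G k 0 (annot u) (γ.zip js) va ∧ strip va = v

/-- embedding of terminal words -/
def tw (w : List T) : Word N T := w.map Sum.inr

/-- the sentential word `u Y v` where `u, v` are terminal and `Y` is an optional nonterminal -/
def sent (u : List T) (Y : Option N) (v : List T) : Word N T :=
  tw u ++ (Y.elim [] (fun y => [Sum.inl y])) ++ tw v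

/-- `L^{(k)}_{X,Y}(G) = { u·v | X ⇒* u Y v by a k-index step sequence }`;
`Y = none` stands for `ε`. -/
def LKY (G : CFG N T) (k : ℕ∞) (X : N) (Y : Option N) : Set (List T) :=
  {w | ∃ u v γ, w = u ++ v ∧ CtrlSeq G k [Sum.inl X] γ (sent u Y v)}

/-- `L_X(G)` -/
def Lang (G : CFG N T) (X : N) : Set (List T) := LKY G ⊤ X none

/-- `L^{(k)}_X(G)` -/
def LangK (G : CFG N T) (k : ℕ) (X : N) : Set (List T) := LKY G (k : ℕ∞) X none

/-- `Γ^{df(k)}_{X,Y}(G)`: control words of `k`-index depth-first step sequences `X ⇒^γ u Y v`. -/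
def GammaDF (G : CFG N T) (k : ℕ) (X : N) (Y : Option N) : Set (List (CProd N T)) :=
  {γ | ∃ u v : List T, DFCtrlFrom G (k : ℕ∞) [Sum.inl X] γ (sent u Y v)}

/-- `L̂_{X,Y}(Γ, G)` -/
def LHat (G : CFG N T) (Γ : Set (List (CProd N T))) (X : N) (Y : Option N) : Set (List T) :=
  {w | ∃ u v, w = u ++ v ∧ ∃ γ ∈ Γ, CtrlSeq G ⊤ [Sum.inl X] γ (sent u Y v)}

/-- the language of the bounded expression `w₁* ⋯ w_d*` -/
def BLang {α : Type} : List (List α) → Set (List α)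
  | [] => {[]}
  | w :: ws => {u | ∃ (n : ℕ) (v : List α), v ∈ BLang ws ∧ u = (List.replicate n w).flatten ++ v}

/-- the words of a bounded expression must be nonempty -/
def IsBExpr {α : Type} (ws : List (List α)) : Prop := ∀ w ∈ ws, w ≠ []

/-- the language of the letter-bounded expression `a₁* ⋯ a_d*` -/
def letterLang {α : Type} (as : List α) : Set (List α) := BLang (as.map (fun a => [a]))

/-- the language `a_i* ⋯ a_j*` (0-indexed segment of `as` from `i` to `j` inclusive) -/
def segLang {α : Type} (as : List α) (i j : ℕ) : Set (List α) :=
  letterLang ((as.drop i).take (j - i + 1))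

end Paper

namespace Paper

variable {N T : Type}

/-- ranked words over the nonterminals -/
abbrev RW (N : Type) := List (N × ℕ)

/-- the set of rank values is downward closed (equivalently, of the form `{0, …, m}`
when nonempty) -/
def contiguousRanks (q : RW N) : Prop := ∀ p ∈ q, ∀ j ≤ p.2, ∃ x : N, (x, j) ∈ q

/-- vertices of the graph `A^{df(k)}_G` -/
def IsVertex (k : ℕ) (q : RW N) : Prop :=
  q.length ≤ k ∧ contiguousRanks q ∧ List.Pairwise (· ≤ ·) (q.map Prod.snd)

/-- `w↓Ξ` : projection of a word to its nonterminals -/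
def ntProj (w : Word N T) : List N := w.filterMap Sum.getLeft?

open Classical in
/-- the rank given to the nonterminals produced by a step rewriting a nonterminal
of maximal rank `i`, where `uv` is the rest of the ranked word -/
noncomputable def newRank (uv : RW N) (i : ℕ) : ℕ :=
  if uv = [] then 0 else if ∀ p ∈ uv, p.2 ≠ i then i else i + 1

/-- the edge relation of the graph `A^{df(k)}_G` -/
def Edge (G : CFG N T) (k : ℕ) (q : RW N) (p : CProd N T) (q' : RW N) : Prop :=
  p ∈ G.prods ∧ IsVertex k q ∧ IsVertex k q' ∧
  ∃ (u v : RW N) (i : ℕ), q = u ++ [(p.1, i)] ++ v ∧ (∀ x ∈ q, x.2 ≤ i) ∧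
    q' = u ++ v ++ (ntProj p.2).map (fun X => (X, newRank (u ++ v) i))

/-- paths in a labeled graph, recording the sequence of edge labels -/
inductive GPath {V E : Type} (edge : V → E → V → Prop) : V → List E → V → Prop
  | refl (v : V) : GPath edge v [] v
  | step {v v' v'' : V} {e : E} {es : List E} :
      edge v e v' → GPath edge v' es v'' → GPath edge v (e :: es) v''

/-- paths recording the successive vertices as well -/
inductive VPath {V E : Type} (edge : V → E → V → Prop) : V → List (E × V) → Prop
  | refl (v : V) : VPath edge v []
  | step {v v' : V} {e : E} {rest : List (E × V)} :
      edge v e v' → VPath edge v' rest → VPath edge v ((e, v') :: rest)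

/-- endpoint of a path starting at `q` -/
def pend {V E : Type} (q : V) (π : List (E × V)) : V := (π.map Prod.snd).getLastD q

/-- a path is acyclic iff it visits no vertex twice -/
def AcyclicFrom {V E : Type} (q : V) (π : List (E × V)) : Prop :=
  (q :: π.map Prod.snd).Nodup

/-- `Decomp edge q pairs fin` asserts that the path obtained by concatenating, in order,
the segments of `pairs` (each an acyclic segment followed by a cycle) and `fin` is a valid
path from `q`, alternating acyclic segments `ς_j` and cycles `θ_j`. -/
def Decomp {V E : Type} (edge : V → E → V → Prop) :
    V → List (List (E × V) × List (E × V)) → List (E × V) → Prop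
  | q, [], fin => VPath edge q fin ∧ AcyclicFrom q fin
  | q, (σ, θ) :: rest, fin =>
      VPath edge q σ ∧ AcyclicFrom q σ ∧
      VPath edge (pend q σ) θ ∧ pend (pend q σ) θ = pend q σ ∧
      Decomp edge (pend q σ) rest fin

/-- `|γ|_a`: total number of occurrences of the terminal `a` in the right-hand
sides of the productions of the control word `γ` -/
def projCnt {A : Type} [DecidableEq A] (γ : List (CProd N A)) (a : A) : ℕ :=
  ((γ.map (fun p => p.2)).flatten.filterMap Sum.getRight?).count a

/-- `proj(γ) = a₁^{|γ|_{a₁}} ⋯ a_s^{|γ|_{a_s}}` -/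
def projW {A : Type} [DecidableEq A] (as : List A) (γ : List (CProd N A)) : List A :=
  (as.map (fun a => List.replicate (projCnt γ a) a)).flatten

end Paper

namespace Paper

variable {N T : Type}

/-- a grammar is in 2-normal form -/
def TwoNF (G : CFG N T) : Prop := ∀ p ∈ G.prods, p.2.length ≤ 2

/-- states of the automaton/grammar `G^b`: `(s, i)` encodes `q^{(s+1)}_{i+1}`,
i.e. position `i` (0-indexed) inside the block `s` (0-indexed) -/
abbrev QB : Type := ℕ × ℕ

/-- `ℓ_s`: length of the `s`-th word of the bounded expression -/
def lenB (ws : List (List T)) (s : ℕ) : ℕ := (ws.getD s []).length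

/-- the `i`-th letter of the `s`-th word -/
def letterB (ws : List (List T)) (s i : ℕ) : Option T := (ws.getD s [])[i]?

/-- the productions of the grammar `G^b` generating the bounded expression `b` -/
def DeltaB (ws : List (List T)) : Set (CProd QB T) :=
  {p | (∃ s i a, s < ws.length ∧ i + 1 < lenB ws s ∧ letterB ws s i = some a ∧
          p = ((s, i), [Sum.inr a, Sum.inl (s, i + 1)]))
     ∨ (∃ s s' a, s ≤ s' ∧ s' < ws.length ∧
          letterB ws s (lenB ws s - 1) = some a ∧
          p = ((s, lenB ws s - 1), [Sum.inr a, Sum.inl (s', 0)]))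
     ∨ (∃ s, s < ws.length ∧ p = ((s, 0), ([] : Word QB T)))}

/-- the grammar `G^b` -/
def GB (ws : List (List T)) : CFG QB T := ⟨DeltaB ws⟩

/-- nonterminals `[q X q']` of the product grammar `G^∩` -/
abbrev NI (N : Type) : Type := QB × N × QB

/-- `q ∈ Ξ^b` -/
def ValidQ (ws : List (List T)) (q : QB) : Prop :=
  q.1 < ws.length ∧ q.2 < lenB ws q.1

/-- `[q X q'] ∈ Ξ^∩`: both states valid and blocks in order -/
def ValidNI (ws : List (List T)) (n : NI N) : Prop :=
  ValidQ ws n.1 ∧ ValidQ ws n.2.2 ∧ n.1.1 ≤ n.2.2.1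

/-- `q ⇒* w·q'` in `G^b` -/
def DerB (ws : List (List T)) (q : QB) (w : List T) (q' : QB) : Prop :=
  ∃ γ, CtrlSeq (GB ws) ⊤ [Sum.inl q] γ (tw w ++ [Sum.inl q'])

/-- the productions `Δ^∩` of the product grammar `G^∩` -/
def DeltaI (G : CFG N T) (ws : List (List T)) : Set (CProd (NI N) T) :=
  {pp | ∃ (q q' : QB) (X : N), ValidNI ws (q, X, q') ∧
     ((∃ w : List T, (X, tw w) ∈ G.prods ∧ DerB ws q w q' ∧
         pp = ((q, X, q'), tw w)) ∨
      (∃ Y : N, (X, [Sum.inl Y]) ∈ G.prods ∧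
         pp = ((q, X, q'), [Sum.inl ((q, Y, q') : NI N)])) ∨
      (∃ (a : T) (Y : N) (qm : QB), (X, [Sum.inr a, Sum.inl Y]) ∈ G.prods ∧
         ((q, [Sum.inr a, Sum.inl qm]) : CProd QB T) ∈ DeltaB ws ∧ ValidNI ws (qm, Y, q') ∧
         pp = ((q, X, q'), [Sum.inr a, Sum.inl ((qm, Y, q') : NI N)])) ∨
      (∃ (a : T) (Y : N) (qm : QB), (X, [Sum.inl Y, Sum.inr a]) ∈ G.prods ∧
         ((qm, [Sum.inr a, Sum.inl q']) : CProd QB T) ∈ DeltaB ws ∧ ValidNI ws (q, Y, qm) ∧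
         pp = ((q, X, q'), [Sum.inl ((q, Y, qm) : NI N), Sum.inr a])) ∨
      (∃ (Y Z : N) (qm : QB), (X, [Sum.inl Y, Sum.inl Z]) ∈ G.prods ∧
         ValidNI ws (q, Y, qm) ∧ ValidNI ws (qm, Z, q') ∧
         pp = ((q, X, q'), [Sum.inl ((q, Y, qm) : NI N), Sum.inl ((qm, Z, q') : NI N)])))}

/-- the product grammar `G^∩` -/
def GI (G : CFG N T) (ws : List (List T)) : CFG (NI N) T := ⟨DeltaI G ws⟩

/-- `ζ` on symbols -/
def zetaS : (NI N ⊕ T) → (N ⊕ T) := Sum.map (fun n => n.2.1) id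

/-- `ζ` on productions -/
def zetaP (p : CProd (NI N) T) : CProd N T := (p.1.2.1, p.2.map zetaS)

/-- `ζ` on control words -/
def zetaC (γ : List (CProd (NI N) T)) : List (CProd N T) := γ.map zetaP

/-- the intermediate state of the (unique, shortest) two-step run of `G^b` from the
left state of `h` to its right state; when the first step wraps, the least possible
intermediate block is chosen -/
noncomputable def iotaMid (ws : List (List T)) (h : NI N) (a b : T) : QB :=
  if h.1.2 + 1 < lenB ws h.1.1 then (h.1.1, h.1.2 + 1)
  else (sInf {y : ℕ | (((h.1.1, h.1.2), [Sum.inr a, Sum.inl ((y, 0) : QB)]) : CProd QB T) ∈ DeltaB ws ∧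
                (((y, 0), [Sum.inr b, Sum.inl (h.2.2 : QB)]) : CProd QB T) ∈ DeltaB ws}, 0)

/-- `ι` on right-hand sides: relabels terminals by the indices (0-indexed) of the
blocks of `b` completed by the corresponding moves of `G^b`; `h` is the head of the
production -/
noncomputable def iotaRhs (ws : List (List T)) (h : NI N) :
    Word (NI N) T → Word (NI N) ℕ
  | [] => []
  | [Sum.inr _] => if h.2.2.2 = 0 then [Sum.inr h.1.1] else []
  | [Sum.inr a, Sum.inr b] =>
      (if (iotaMid ws h a b).2 = 0 then [Sum.inr h.1.1] else []) ++
      (if h.2.2.2 = 0 then [Sum.inr (iotaMid ws h a b).1] else [])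
  | [Sum.inr _, Sum.inl m] => (if m.1.2 = 0 then [Sum.inr h.1.1] else []) ++ [Sum.inl m]
  | [Sum.inl m, Sum.inr _] => [Sum.inl m] ++ (if h.2.2.2 = 0 then [Sum.inr m.2.2.1] else [])
  | other => other.map (Sum.map id (fun _ => 0))

/-- the map `ι : Δ^∩ → Δ^⋈` -/
noncomputable def iota (ws : List (List T)) (p : CProd (NI N) T) : CProd (NI N) ℕ :=
  (p.1, iotaRhs ws p.1 p.2)

/-- the grammar `G^⋈`, whose terminals are the (0-indexed) letters `a₁, …, a_d`
represented by natural numbers -/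
noncomputable def GBow (G : CFG N T) (ws : List (List T)) : CFG (NI N) ℕ :=
  ⟨iota ws '' DeltaI G ws⟩

end Paper

namespace Paper

variable {N A : Type}

/-- `Ξ̂`: nonterminals producing some word starting with `a₁` and some word ending
with `a_d` -/
def XiHat (G : CFG N A) (a1 ad : A) : Set N :=
  {Y | (∃ w ∈ Lang G Y, ∃ v, w = a1 :: v) ∧ (∃ w ∈ Lang G Y, ∃ v, w = v ++ [ad])}

/-- the grammar `G^♯` (here `S = Ξ̂`, and `Ξ̌` is its complement) -/
def GSharp (G : CFG N A) (S : Set N) : CFG N A :=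
  ⟨{p | p ∈ G.prods ∧ p.1 ∉ S} ∪
   {p | p ∈ G.prods ∧ p.1 ∈ S ∧ ∃ (u : Word N A) (Xr : N) (v : Word N A),
      Xr ∈ S ∧ p.2 = u ++ [Sum.inl Xr] ++ v}⟩

/-- the grammar `G_{i,w}` for a pivot production `piv` (here `S = Ξ̂`) -/
def GPivot (G : CFG N A) (S : Set N) (piv : CProd N A) : CFG N A :=
  ⟨{p | p ∈ G.prods ∧ p.1 ∉ S} ∪ {piv}⟩

/-- `G` is reduced for `X` -/
def Reduced (G : CFG N A) (X : N) : Prop :=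
  ∀ Y : N, Y ≠ X → (LKY G ⊤ X (some Y)).Nonempty ∧ (Lang G Y).Nonempty

/-- `a₁* ⋯ a_d*` (given by the list `as`) is the minimal strict letter-bounded
expression for `L_X(G)` -/
def MinimalLB (G : CFG N A) (X : N) (as : List A) : Prop :=
  Lang G X ⊆ letterLang as ∧ ∀ i < as.length, ¬ (Lang G X ⊆ letterLang (as.eraseIdx i))

/-- a symbol of `A ∪ {ε}` as a word -/
def optT (a : Option A) : Word N A := a.elim [] (fun x => [Sum.inr x])

/-- a symbol of `Ξ ∪ {ε}` as a word -/
def optN (y : Option N) : Word N A := y.elim [] (fun x => [Sum.inl x])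

/-- `y ⇒^γ u_y` is a (possibly empty) `k`-index depth-first derivation, where
`y ∈ Ξ ∪ {ε}`; for `y = ε` the derivation is empty -/
def optDFDer (H : CFG N A) (k : ℕ) (y : Option N) (γ : List (CProd N A)) : Prop :=
  match y with
  | some Y => ∃ w : List A, DFCtrlFrom H (k : ℕ∞) [Sum.inl Y] γ (tw w)
  | none => γ = []

/-- the grammar `G_k` with productions `X_i → X_{i-1} X_{i-1}` (1 ≤ i ≤ k) and `X_0 → a` -/
def Gk (k : ℕ) : CFG ℕ Unit :=
  ⟨{p | (∃ i, 1 ≤ i ∧ i ≤ k ∧ p = (i, [Sum.inl (i - 1), Sum.inl (i - 1)])) ∨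
        p = (0, [Sum.inr ()])}⟩

end Paper

namespace Paper

open List

section Generic
variable {N T : Type}

theorem ntCountA_append (u v : AWord N T) : ntCountA (u ++ v) = ntCountA u + ntCountA v := by
  simp [ntCountA, List.filter_append]

theorem ntCount_append (u v : Word N T) : ntCount (u ++ v) = ntCount u + ntCount v := by
  simp [ntCount, List.filter_append]

theorem list_decomp_at {α : Type} {u : List α} {j : ℕ} {e : α} (h : u[j]? = some e) :
    ∃ l1 l2, u = l1 ++ e :: l2 ∧ l1.length = j := by
  rw [List.getElem?_eq_some_iff] at h
  obtain ⟨hj, he⟩ := h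
  refine ⟨u.take j, u.drop (j + 1), ?_, ?_⟩
  · conv_lhs => rw [← List.take_append_drop j u]
    rw [List.drop_eq_getElem_cons hj, he]
  · simp [List.length_take]; omega

theorem applyProdA_eq (p : CProd N T) (m : ℕ) (l1 l2 : AWord N T) (e : (N ⊕ T) × ℕ) :
    applyProdA p l1.length m (l1 ++ e :: l2) = l1 ++ p.2.map (fun s => (s, m)) ++ l2 := by
  simp [applyProdA]

theorem applyProd_eq (p : CProd N T) (l1 l2 : Word N T) (e : N ⊕ T) :
    applyProd p l1.length (l1 ++ e :: l2) = l1 ++ p.2 ++ l2 := by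
  simp [applyProd]

theorem get?_middle (l1 l2 : List ((N ⊕ T) × ℕ)) (e : (N ⊕ T) × ℕ) :
    (l1 ++ e :: l2)[l1.length]? = some e := by
  rw [List.getElem?_append_right (le_refl _)]; simp

theorem strip_append (u v : AWord N T) : strip (u ++ v) = strip u ++ strip v := by
  simp [strip]

theorem strip_applyProdA (p : CProd N T) (j m : ℕ) (u : AWord N T) :
    strip (applyProdA p j m u) = applyProd p j (strip u) := by
  simp [strip, applyProdA, applyProd, List.map_take, List.map_drop, Function.comp_def]

theorem ntCount_strip (u : AWord N T) : ntCount (strip u) = ntCountA u := by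
  simp [ntCount, ntCountA, strip, List.filter_map, Function.comp_def]

theorem strip_annot (u : Word N T) : strip (annot u) = u := by
  simp [strip, annot, Function.comp_def]

theorem ntCount_tw (w : List T) : ntCount (tw w : Word N T) = 0 := by
  simp [ntCount, tw, List.filter_map, Function.comp_def]

theorem DFSeq_count {G : CFG N T} {c : ℕ∞} {m : ℕ} {u va : AWord N T} {l} :
    DFSeq G c m u l va → (ntCountA u : ℕ∞) ≤ c := by
  intro h; cases h with
  | refl _ _ h => exact h
  | step h _ _ _ _ => exact h

theorem DFSeq_append {G : CFG N T} {c : ℕ∞} {l2 : List (CProd N T × ℕ)} {va : AWord N T} :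
    ∀ {l1 : List (CProd N T × ℕ)} {m : ℕ} {u w : AWord N T},
    DFSeq G c m u l1 w → DFSeq G c (m + l1.length) w l2 va → DFSeq G c m u (l1 ++ l2) va := by
  intro l1
  induction l1 with
  | nil => intro m u w h1 h2; cases h1; simpa using h2
  | cons a rest ih =>
    intro m u w h1 h2
    rw [List.length_cons] at h2
    have e : m + (rest.length + 1) = (m + 1) + rest.length := by omega
    rw [e] at h2
    cases h1 with
    | step hc hp hg hdf htail => exact DFSeq.step hc hp hg hdf (ih htail h2)

theorem DFSeq_split {G : CFG N T} {c : ℕ∞} :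
    ∀ {l1 l2 : List (CProd N T × ℕ)} {m : ℕ} {u va : AWord N T},
    DFSeq G c m u (l1 ++ l2) va →
    ∃ w, DFSeq G c m u l1 w ∧ DFSeq G c (m + l1.length) w l2 va := by
  intro l1
  induction l1 with
  | nil => intro l2 m u va h; exact ⟨u, DFSeq.refl m u (DFSeq_count h), by simpa using h⟩
  | cons a rest ih =>
    intro l2 m u va h
    rw [List.length_cons]
    have e : m + (rest.length + 1) = (m + 1) + rest.length := by omega
    rw [e]
    cases h with
    | step hc hp hg hdf htail =>
      obtain ⟨w, h1, h2⟩ := ih htail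
      exact ⟨w, DFSeq.step hc hp hg hdf h1, h2⟩

theorem DFSeq_toKSeq {G : CFG N T} {c : ℕ∞} {m : ℕ} {u va : AWord N T} {l}
    (h : DFSeq G c m u l va) : KSeq G c (strip u) l (strip va) := by
  induction h with
  | refl _ _ hc => exact KSeq.refl _ (by rwa [ntCount_strip])
  | step hc hp hg _ _ ih =>
    refine KSeq.step (by rwa [ntCount_strip]) hp ?_ (by rwa [strip_applyProdA] at ih)
    rw [strip, List.getElem?_map, hg]; rfl

theorem ntCountA_applyProdA {p : CProd N T} {j m : ℕ} {u : AWord N T} {x : N} {o : ℕ}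
    (h : u[j]? = some (Sum.inl x, o)) :
    ntCountA (applyProdA p j m u) + 1 = ntCountA u + ntCount p.2 := by
  obtain ⟨l1, l2, rfl, hl⟩ := list_decomp_at h
  subst hl
  rw [applyProdA_eq]
  simp [ntCountA_append, ntCountA, ntCount, List.filter_map, Function.comp_def, List.filter_cons]
  omega

end Generic

/-! ### The grammar `G_k` -/

/-- the production `X_{i+1} → X_i X_i` -/
def prA (i : ℕ) : CProd ℕ Unit := (i + 1, [Sum.inl i, Sum.inl i])

/-- the production `X_0 → a` -/
def pr0 : CProd ℕ Unit := (0, [Sum.inr ()])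

theorem prA_mem {k i : ℕ} (h : i + 1 ≤ k) : prA i ∈ (Gk k).prods :=
  Or.inl ⟨i + 1, by omega, h, by simp [prA]⟩

theorem pr0_mem {k : ℕ} : pr0 ∈ (Gk k).prods := Or.inr rfl

theorem Gk_det {k : ℕ} {p q : CProd ℕ Unit} (hp : p ∈ (Gk k).prods)
    (hq : q ∈ (Gk k).prods) (h : p.1 = q.1) : p = q := by
  rcases hp with ⟨i, hi1, hik, rfl⟩ | rfl <;> rcases hq with ⟨i', hi1', hik', rfl⟩ | rfl <;>
    simp_all <;> omega

/-- the canonical depth-first control word deriving `a^{2^i}` from `X_i` -/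
def cw : ℕ → List (CProd ℕ Unit)
  | 0 => [pr0]
  | (i + 1) => prA i :: (cw i ++ cw i)

theorem cw_length (i : ℕ) : (cw i).length = 2 ^ (i + 1) - 1 := by
  induction i with
  | zero => rfl
  | succ i ih =>
    have h1 : 1 ≤ 2 ^ (i + 1) := Nat.one_le_two_pow
    simp [cw, ih, pow_succ]; omega

/-! ### Annotated nonterminal entries -/

/-- the list of (nonterminal, index) entries of an annotated word -/
def ents (u : AWord ℕ Unit) : List (ℕ × ℕ) :=
  u.filterMap (fun so => so.1.getLeft?.map (fun x => (x, so.2)))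

theorem ents_append (u v : AWord ℕ Unit) : ents (u ++ v) = ents u ++ ents v := by
  simp [ents]

theorem ents_length (u : AWord ℕ Unit) : (ents u).length = ntCountA u := by
  induction u with
  | nil => rfl
  | cons a u ih =>
    obtain ⟨s, o⟩ := a
    cases s <;> simp [ents, ntCountA, List.filterMap_cons, List.filter_cons] at * <;>
      simpa [ents, ntCountA] using ih

theorem mem_ents {u : AWord ℕ Unit} {x o : ℕ} :
    (x, o) ∈ ents u ↔ (Sum.inl x, o) ∈ u := by
  simp only [ents, List.mem_filterMap]
  constructor
  · rintro ⟨⟨s, o'⟩, hm, he⟩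
    cases s with
    | inl y =>
      simp only [Sum.getLeft?, Option.map_some, Option.some.injEq, Prod.mk.injEq] at he
      obtain ⟨rfl, rfl⟩ := he; exact hm
    | inr t => simp [Sum.getLeft?] at he
  · intro hm; exact ⟨(Sum.inl x, o), hm, by simp [Sum.getLeft?]⟩

theorem ents_get {u : AWord ℕ Unit} {j x o : ℕ} (h : u[j]? = some (Sum.inl x, o)) :
    (x, o) ∈ ents u := by
  exact mem_ents.2 (List.mem_of_getElem? h)

theorem ents_pos {u : AWord ℕ Unit} {x o : ℕ} (h : (x, o) ∈ ents u) :
    ∃ j : ℕ, u[j]? = some (Sum.inl x, o) := by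
  obtain ⟨n, hn, hg⟩ := List.getElem_of_mem (mem_ents.1 h)
  exact ⟨n, by rw [List.getElem?_eq_getElem hn, hg]⟩

theorem ents_annot_single (x : ℕ) : ents (annot [Sum.inl x]) = [(x, 0)] := rfl

theorem dfOK_max {u : AWord ℕ Unit} {j x o : ℕ} (hdf : dfOK u j)
    (hj : u[j]? = some (Sum.inl x, o)) :
    ∀ a ∈ ents u, a.2 ≤ o := by
  rintro ⟨y, o'⟩ ha
  obtain ⟨i, hi⟩ := ents_pos ha
  exact hdf i y o' hi _ o hj

theorem ents_eq_nil {u : AWord ℕ Unit} (h : ntCountA u = 0) : ents u = [] := by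
  have := ents_length u
  exact List.length_eq_zero_iff.1 (by omega)

theorem ents_no_nt {mid : AWord ℕ Unit} {w : List Unit} (h : strip mid = tw w) :
    ents mid = [] :=
  ents_eq_nil (by rw [← ntCount_strip, h, ntCount_tw])

/-- the multiset step equation -/
theorem ents_applyProdA {p : CProd ℕ Unit} {j m : ℕ} {u : AWord ℕ Unit} {x o : ℕ}
    (h : u[j]? = some (Sum.inl x, o)) :
    (↑(ents (applyProdA p j m u)) : Multiset (ℕ × ℕ)) + {(x, o)} =
      ↑(ents u) + ↑(ents (p.2.map (fun s => (s, m)))) := by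
  obtain ⟨l1, l2, rfl, hl⟩ := list_decomp_at h
  subst hl
  rw [applyProdA_eq]
  have e1 : ents (l1 ++ (Sum.inl x, o) :: l2) = ents l1 ++ [(x, o)] ++ ents l2 := by
    simp [ents, List.filterMap_cons, Sum.getLeft?]
  rw [ents_append, ents_append, e1]
  rw [← Multiset.coe_singleton]
  simp only [← Multiset.coe_add]
  abel

/-! ### Uniqueness of the depth-first control word -/

/-- entries with equal index have equal symbol -/
def EqIdx (E : Multiset (ℕ × ℕ)) : Prop := ∀ a ∈ E, ∀ b ∈ E, a.2 = b.2 → a.1 = b.1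

/-- all indices bounded by `m` -/
def BddIdx (m : ℕ) (E : Multiset (ℕ × ℕ)) : Prop := ∀ a ∈ E, a.2 ≤ m

theorem EqIdx.mono {E F : Multiset (ℕ × ℕ)} (h : EqIdx F) (hle : E ≤ F) : EqIdx E :=
  fun a ha b hb => h a (Multiset.mem_of_le hle ha) b (Multiset.mem_of_le hle hb)

theorem BddIdx.mono {m : ℕ} {E F : Multiset (ℕ × ℕ)} (h : BddIdx m F) (hle : E ≤ F) :
    BddIdx m E := fun a ha => h a (Multiset.mem_of_le hle ha)

theorem step_inv {k m : ℕ} {p : CProd ℕ Unit} {j : ℕ} {u : AWord ℕ Unit} {x o : ℕ}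
    (hp : p ∈ (Gk k).prods) (hg : u[j]? = some (Sum.inl x, o))
    (hEq : EqIdx ↑(ents u)) (hB : BddIdx m ↑(ents u)) :
    EqIdx ↑(ents (applyProdA p j (m + 1) u)) ∧
      BddIdx (m + 1) ↑(ents (applyProdA p j (m + 1) u)) := by
  have hle : (↑(ents (applyProdA p j (m + 1) u)) : Multiset (ℕ × ℕ)) ≤
      ↑(ents u) + ↑(ents (p.2.map (fun s => (s, m + 1)))) := by
    rw [← ents_applyProdA hg]
    exact Multiset.le_add_right _ _
  have hbig : EqIdx (↑(ents u) + ↑(ents (p.2.map (fun s => (s, m + 1))))) ∧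
      BddIdx (m + 1) (↑(ents u) + ↑(ents (p.2.map (fun s => (s, m + 1))))) := by
    rcases hp with ⟨i, hi1, hik, rfl⟩ | rfl
    · have he : ents (([Sum.inl (i - 1), Sum.inl (i - 1)] :
          Word ℕ Unit).map (fun s => (s, m + 1))) = [(i - 1, m + 1), (i - 1, m + 1)] := by
        simp [ents, List.filterMap_cons, Sum.getLeft?]
      rw [he]
      constructor
      · rintro a ha b hb hab
        rw [Multiset.mem_add, Multiset.mem_coe, Multiset.mem_coe] at ha hb
        rcases ha with ha | ha <;> rcases hb with hb | hb
        · exact hEq a (Multiset.mem_coe.2 ha) b (Multiset.mem_coe.2 hb) hab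
        · exfalso
          have := hB a (Multiset.mem_coe.2 ha)
          simp at hb
          rcases hb with rfl | rfl <;> omega
        · exfalso
          have := hB b (Multiset.mem_coe.2 hb)
          simp at ha
          rcases ha with rfl | rfl <;> omega
        · simp at ha hb
          rcases ha with rfl | rfl <;> rcases hb with rfl | rfl <;> rfl
      · rintro a ha
        rw [Multiset.mem_add, Multiset.mem_coe, Multiset.mem_coe] at ha
        rcases ha with ha | ha
        · exact le_trans (hB a (Multiset.mem_coe.2 ha)) (Nat.le_succ m)
        · simp at ha; rcases ha with rfl | rfl <;> simp
    · have he : ents (([Sum.inr ()] : Word ℕ Unit).map (fun s => (s, m + 1))) = [] := by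
        simp [ents, List.filterMap_cons, Sum.getLeft?]
      rw [he]
      constructor
      · rintro a ha b hb hab
        simp only [Multiset.coe_nil, add_zero] at ha hb
        exact hEq a ha b hb hab
      · rintro a ha
        simp only [Multiset.coe_nil, add_zero] at ha
        exact le_trans (hB a ha) (Nat.le_succ m)
  exact ⟨hbig.1.mono hle, hbig.2.mono hle⟩

theorem df_unique {k : ℕ} :
    ∀ {l1 : List (CProd ℕ Unit × ℕ)} {m : ℕ} {u1 u2 va1 va2 : AWord ℕ Unit}
      {l2 : List (CProd ℕ Unit × ℕ)},
    DFSeq (Gk k) ⊤ m u1 l1 va1 → DFSeq (Gk k) ⊤ m u2 l2 va2 →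
    (↑(ents u1) : Multiset (ℕ × ℕ)) = ↑(ents u2) →
    EqIdx ↑(ents u1) → BddIdx m ↑(ents u1) →
    ntCountA va1 = 0 → ntCountA va2 = 0 →
    l1.map Prod.fst = l2.map Prod.fst := by
  intro l1
  induction l1 with
  | nil =>
    intro m u1 u2 va1 va2 l2 h1 h2 hmm hEq hB hv1 hv2
    cases h1 with
    | refl =>
      have h1nil : ents u1 = [] := ents_eq_nil hv1
      have h2nil : ents u2 = [] := by
        have hperm : ents u1 ~ ents u2 := Multiset.coe_eq_coe.1 hmm
        rw [h1nil] at hperm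
        exact hperm.symm.eq_nil
      cases h2 with
      | refl => rfl
      | step hc2 hp2 hg2 hdf2 ht2 =>
        exact absurd (ents_get hg2) (by simp [h2nil])
  | cons a rest ih =>
    intro m u1 u2 va1 va2 l2 h1 h2 hmm hEq hB hv1 hv2
    obtain ⟨p, j⟩ := a
    cases h1 with
    | @step _ _ _ _ _ o1 _ hc1 hp1 hg1 hdf1 ht1 =>
      have m1 : (p.1, o1) ∈ ents u1 := ents_get hg1
      cases h2 with
      | refl =>
        exfalso
        have h2nil : ents u2 = [] := ents_eq_nil hv2
        have : (p.1, o1) ∈ (↑(ents u2) : Multiset (ℕ × ℕ)) := by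
          rw [← hmm]; exact Multiset.mem_coe.2 m1
        rw [h2nil] at this
        simp at this
      | @step _ _ _ q j2 o2 rest2 hc2 hp2 hg2 hdf2 ht2 =>
        have m2 : (q.1, o2) ∈ ents u2 := ents_get hg2
        have m2' : (q.1, o2) ∈ ents u1 := by
          have : (q.1, o2) ∈ (↑(ents u1) : Multiset (ℕ × ℕ)) := by
            rw [hmm]; exact Multiset.mem_coe.2 m2
          exact Multiset.mem_coe.1 this
        have m1' : (p.1, o1) ∈ ents u2 := by
          have : (p.1, o1) ∈ (↑(ents u2) : Multiset (ℕ × ℕ)) := by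
            rw [← hmm]; exact Multiset.mem_coe.2 m1
          exact Multiset.mem_coe.1 this
        have hle1 : o2 ≤ o1 := dfOK_max hdf1 hg1 (q.1, o2) m2'
        have hle2 : o1 ≤ o2 := dfOK_max hdf2 hg2 (p.1, o1) m1'
        have ho : o1 = o2 := le_antisymm hle2 hle1
        have hx : p.1 = q.1 :=
          hEq (p.1, o1) (Multiset.mem_coe.2 m1) (q.1, o2) (Multiset.mem_coe.2 m2') ho
        have hpq : p = q := Gk_det hp1 hp2 hx
        subst hpq
        subst ho
        have e1 := ents_applyProdA (p := p) (m := m + 1) hg1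
        have e2 := ents_applyProdA (p := p) (m := m + 1) hg2
        have hmm' : (↑(ents (applyProdA p j (m + 1) u1)) : Multiset (ℕ × ℕ)) =
            ↑(ents (applyProdA p j2 (m + 1) u2)) := by
          have t : (↑(ents u1) : Multiset (ℕ × ℕ)) +
              ↑(ents (p.2.map (fun s => (s, m + 1)))) =
              ↑(ents (applyProdA p j2 (m + 1) u2)) + {(p.1, o1)} := by
            rw [hmm]; exact e2.symm
          exact add_right_cancel (e1.trans t)
        obtain ⟨hEq', hB'⟩ := step_inv hp1 hg1 hEq hB
        have := ih ht1 ht2 hmm' hEq' hB' hv1 hv2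
        simp [this]
/-! ### Construction of the canonical depth-first derivation -/

theorem mid_no_inl {mid : AWord ℕ Unit} {w : List Unit} (h : strip mid = tw w)
    {x o : ℕ} (hm : (Sum.inl x, o) ∈ mid) : False := by
  have : (x, o) ∈ ents mid := mem_ents.2 hm
  rw [ents_no_nt h] at this
  simp at this

theorem cw_build {k : ℕ} :
    ∀ i, i ≤ k → ∀ (m o : ℕ) (u v : AWord ℕ Unit),
    o ≤ m →
    (∀ x o', (Sum.inl x, o') ∈ u → o' ≤ o) →
    (∀ x o', (Sum.inl x, o') ∈ v → o' ≤ o) →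
    ∃ (js : List ℕ) (mid : AWord ℕ Unit),
      js.length = (cw i).length ∧ strip mid = tw (List.replicate (2 ^ i) ()) ∧
      DFSeq (Gk k) ⊤ m (u ++ (Sum.inl i, o) :: v) ((cw i).zip js) (u ++ mid ++ v) := by
  intro i
  induction i with
  | zero =>
    intro _ m o u v hom hu hv
    refine ⟨[u.length], [(Sum.inr (), m + 1)], rfl, by simp [strip, tw], ?_⟩
    show DFSeq _ _ _ _ [(pr0, u.length)] _
    refine DFSeq.step le_top pr0_mem (get?_middle u v _) ?_ ?_
    · intro i' x o' hget s oj hgetj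
      rw [get?_middle] at hgetj
      cases hgetj
      have hmem : (Sum.inl x, o') ∈ u ++ (Sum.inl 0, o) :: v := by
        exact List.mem_of_getElem? hget
      rcases List.mem_append.1 hmem with h | h
      · exact hu x o' h
      · rcases List.mem_cons.1 h with h | h
        · cases h; rfl
        · exact hv x o' h
    · have e : applyProdA pr0 u.length (m + 1) (u ++ (Sum.inl 0, o) :: v)
          = u ++ [(Sum.inr (), m + 1)] ++ v := by
        simpa [pr0] using applyProdA_eq pr0 (m + 1) u v (Sum.inl 0, o)
      rw [e]
      exact DFSeq.refl _ _ le_top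
  | succ i ih =>
    intro hik m o u v hom hu hv
    obtain ⟨js1, mid1, hl1, hs1, hd1⟩ :=
      ih (by omega) (m + 1) (m + 1) u ((Sum.inl i, m + 1) :: v) (le_refl _)
        (fun x o' h => le_trans (hu x o' h) (by omega))
        (by intro x o' h
            rcases List.mem_cons.1 h with h | h
            · cases h; rfl
            · exact le_trans (hv x o' h) (by omega))
    obtain ⟨js2, mid2, hl2, hs2, hd2⟩ :=
      ih (by omega) (m + 1 + (cw i).length) (m + 1) (u ++ mid1) v (by omega)
        (by intro x o' h
            rcases List.mem_append.1 h with h | h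
            · exact le_trans (hu x o' h) (by omega)
            · exact absurd (mid_no_inl hs1 h) (fun f => f))
        (fun x o' h => le_trans (hv x o' h) (by omega))
    refine ⟨u.length :: (js1 ++ js2), mid1 ++ mid2, ?_, ?_, ?_⟩
    · simp [cw, hl1, hl2]
    · rw [strip_append, hs1, hs2]
      have e2 : (2 : ℕ) ^ (i + 1) = 2 ^ i + 2 ^ i := by ring
      rw [e2, List.replicate_add]
      simp [tw]
    · show DFSeq _ _ _ _ ((prA i :: (cw i ++ cw i)).zip (u.length :: (js1 ++ js2))) _
      have hzip : (prA i :: (cw i ++ cw i)).zip (u.length :: (js1 ++ js2)) =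
          (prA i, u.length) :: ((cw i).zip js1 ++ (cw i).zip js2) := by
        rw [List.zip_cons_cons, List.zip_append hl1.symm]
      rw [hzip]
      refine DFSeq.step le_top (prA_mem hik) (get?_middle u v _) ?_ ?_
      · intro i' x o' hget s oj hgetj
        rw [get?_middle] at hgetj
        cases hgetj
        have hmem : (Sum.inl x, o') ∈ u ++ (Sum.inl (i + 1), o) :: v := by
          exact List.mem_of_getElem? hget
        rcases List.mem_append.1 hmem with h | h
        · exact hu x o' h
        · rcases List.mem_cons.1 h with h | h
          · cases h; rfl
          · exact hv x o' h
      · have e : applyProdA (prA i) u.length (m + 1) (u ++ (Sum.inl (i + 1), o) :: v)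
            = u ++ (Sum.inl i, m + 1) :: (Sum.inl i, m + 1) :: v := by
          simpa [prA] using applyProdA_eq (prA i) (m + 1) u v (Sum.inl (i + 1), o)
        rw [e]
        have hd1' : DFSeq (Gk k) ⊤ (m + 1)
            (u ++ (Sum.inl i, m + 1) :: (Sum.inl i, m + 1) :: v)
            ((cw i).zip js1) (u ++ mid1 ++ ((Sum.inl i, m + 1) :: v)) := hd1
        have hd2' : DFSeq (Gk k) ⊤ (m + 1 + (cw i).length)
            (u ++ mid1 ++ ((Sum.inl i, m + 1) :: v))
            ((cw i).zip js2) (u ++ (mid1 ++ mid2) ++ v) := by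
          have := hd2
          simpa [List.append_assoc] using this
        have hlen : ((cw i).zip js1).length = (cw i).length := by
          rw [List.length_zip, hl1, Nat.min_self]
        refine DFSeq_append hd1' ?_
        rwa [hlen]
/-! ### Index bounds along the canonical control word -/

theorem ntCount_prA (i : ℕ) : ntCount (prA i).2 = 2 := rfl
theorem ntCount_pr0 : ntCount (pr0 : CProd ℕ Unit).2 = 0 := rfl

theorem cw_lower {k : ℕ} {c : ℕ∞} :
    ∀ i, ∀ {m : ℕ} {u va : AWord ℕ Unit} {js : List ℕ},
    js.length = (cw i).length →
    DFSeq (Gk k) c m u ((cw i).zip js) va →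
    ((ntCountA u + i : ℕ) : ℕ∞) ≤ c := by
  intro i
  induction i with
  | zero =>
    intro m u va js hlen h
    match js, hlen with
    | [j], _ =>
      cases h with
      | step hc _ _ _ _ => simpa using hc
  | succ i ih =>
    intro m u va js hlen h
    match js, hlen with
    | j :: js', hlen =>
      have hzip : (cw (i + 1)).zip (j :: js') =
          (prA i, j) :: ((cw i ++ cw i).zip js') := rfl
      rw [hzip] at h
      cases h with
      | @step _ _ _ _ _ o _ hc hp hg hdf ht =>
        have hjs' : js'.length = (cw i).length + (cw i).length := by
          simpa [cw] using hlen
        have hzip2 : (cw i ++ cw i).zip js' =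
            (cw i).zip (js'.take (cw i).length) ++ (cw i).zip (js'.drop (cw i).length) := by
          conv_lhs => rw [← List.take_append_drop (cw i).length js']
          exact List.zip_append (by simp [List.length_take]; omega)
        rw [hzip2] at ht
        obtain ⟨w2, t1, _⟩ := DFSeq_split ht
        have hl1 : (js'.take (cw i).length).length = (cw i).length := by
          simp [List.length_take]; omega
        have hcnt := ntCountA_applyProdA (p := prA i) (m := m + 1) hg
        rw [ntCount_prA] at hcnt
        have := ih hl1 t1
        have e : ntCountA u + (i + 1) = ntCountA (applyProdA (prA i) j (m + 1) u) + i := by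
          omega
        rw [e]
        exact this

theorem cw_upgrade {k : ℕ} :
    ∀ i, ∀ {m : ℕ} {u va : AWord ℕ Unit} {js : List ℕ},
    js.length = (cw i).length →
    DFSeq (Gk k) ⊤ m u ((cw i).zip js) va →
    ntCountA u + i ≤ k + 1 →
    DFSeq (Gk k) ((k + 1 : ℕ) : ℕ∞) m u ((cw i).zip js) va ∧
      ntCountA va + 1 = ntCountA u := by
  intro i
  induction i with
  | zero =>
    intro m u va js hlen h hcnt
    match js, hlen with
    | [j], _ =>
      cases h with
      | @step _ _ _ _ _ o _ hc hp hg hdf ht =>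
        cases ht with
        | refl =>
          have hcw1 := ntCountA_applyProdA (p := pr0) (m := m + 1) hg
          rw [ntCount_pr0] at hcw1
          refine ⟨DFSeq.step (Nat.cast_le.2 (by omega)) hp hg hdf
            (DFSeq.refl _ _ (Nat.cast_le.2 (by omega))), by omega⟩
  | succ i ih =>
    intro m u va js hlen h hcnt
    match js, hlen with
    | j :: js', hlen =>
      have hzip : (cw (i + 1)).zip (j :: js') =
          (prA i, j) :: ((cw i ++ cw i).zip js') := rfl
      rw [hzip] at h ⊢
      cases h with
      | @step _ _ _ _ _ o _ hc hp hg hdf ht =>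
        have hjs' : js'.length = (cw i).length + (cw i).length := by
          simpa [cw] using hlen
        have hzip2 : (cw i ++ cw i).zip js' =
            (cw i).zip (js'.take (cw i).length) ++ (cw i).zip (js'.drop (cw i).length) := by
          conv_lhs => rw [← List.take_append_drop (cw i).length js']
          exact List.zip_append (by simp [List.length_take]; omega)
        rw [hzip2] at ht ⊢
        obtain ⟨w2, t1, t2⟩ := DFSeq_split ht
        have hl1 : (js'.take (cw i).length).length = (cw i).length := by
          simp [List.length_take]; omega
        have hl2 : (js'.drop (cw i).length).length = (cw i).length := by
          simp; omega
        have hcw1 := ntCountA_applyProdA (p := prA i) (m := m + 1) hg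
        rw [ntCount_prA] at hcw1
        obtain ⟨up1, hc1⟩ := ih hl1 t1 (by omega)
        obtain ⟨up2, hc2⟩ := ih hl2 (by
          have e : (m + 1) + ((cw i).zip (js'.take (cw i).length)).length =
              (m + 1) + (cw i).length := by
            rw [List.length_zip, hl1, Nat.min_self]
          rwa [e] at t2) (by omega)
        refine ⟨DFSeq.step (Nat.cast_le.2 (by omega)) hp hg hdf ?_, by omega⟩
        refine DFSeq_append up1 ?_
        have e : (m + 1) + ((cw i).zip (js'.take (cw i).length)).length =
            (m + 1) + (cw i).length := by
          rw [List.length_zip, hl1, Nat.min_self]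
        rwa [e]
/-! ### Weights and the language of `G_k` -/

/-- weight of a word: `X_i` weighs `2^i`, a terminal weighs `1` -/
def wt (u : Word ℕ Unit) : ℕ := (u.map (Sum.elim (fun i => 2 ^ i) (fun _ => 1))).sum

theorem wt_append (u v : Word ℕ Unit) : wt (u ++ v) = wt u + wt v := by
  simp [wt]

theorem wt_tw (w : List Unit) : wt (tw w) = w.length := by
  induction w with
  | nil => rfl
  | cons a w ih =>
    simp [wt, tw] at ih ⊢
    omega

theorem KSeq_wt {k : ℕ} {c : ℕ∞} {u v : Word ℕ Unit} {l} (h : KSeq (Gk k) c u l v) :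
    wt u = wt v := by
  induction h with
  | refl => rfl
  | @step u' v' p j rest hc hp hg hK ih =>
    rw [← ih]
    obtain ⟨l1, l2, hu, hl⟩ := list_decomp_at hg
    subst hl
    rw [hu, applyProd_eq]
    have hr : wt p.2 = 2 ^ p.1 := by
      rcases hp with ⟨i, hi1, hik, rfl⟩ | rfl
      · show 2 ^ (i - 1) + (2 ^ (i - 1) + 0) = 2 ^ i
        have e : 2 ^ i = 2 ^ (i - 1) * 2 := by
          rw [← pow_succ]
          congr 1
          omega
        omega
      · rfl
    rw [wt_append, wt_append, wt_append]
    have h1 : wt [Sum.inl p.1] = 2 ^ p.1 := by simp [wt]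
    have h2 : wt (Sum.inl p.1 :: l2) = 2 ^ p.1 + wt l2 := by simp [wt]
    omega

/-- Part (1). -/
theorem Gk_lang (k : ℕ) : Lang (Gk k) k = {List.replicate (2 ^ k) ()} := by
  ext w
  simp only [Set.mem_singleton_iff]
  constructor
  · rintro ⟨u, v, γ, rfl, js, hlen, hK⟩
    have hw := KSeq_wt hK
    have h1 : wt [Sum.inl k] = 2 ^ k := by simp [wt]
    have h2 : wt (sent u none v) = u.length + v.length := by
      show wt (tw u ++ [] ++ tw v) = _
      rw [wt_append, wt_append, wt_tw, wt_tw]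
      rfl
    refine List.eq_replicate_iff.2 ⟨?_, fun b _ => rfl⟩
    simp only [List.length_append]
    omega
  · rintro rfl
    obtain ⟨js, mid, hlen, hstrip, hdf⟩ :=
      cw_build (k := k) k le_rfl 0 0 [] [] le_rfl (by simp) (by simp)
    refine ⟨List.replicate (2 ^ k) (), [], cw k, by simp, js, hlen, ?_⟩
    have hK := DFSeq_toKSeq hdf
    have e1 : strip (([] ++ (Sum.inl k, 0) :: [] : AWord ℕ Unit)) = ([Sum.inl k] : Word ℕ Unit) := rfl
    have e2 : strip ([] ++ mid ++ []) = tw (List.replicate (2 ^ k) ()) := by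
      simpa using hstrip
    rw [e1, e2] at hK
    have e3 : sent (List.replicate (2 ^ k) ()) none ([] : List Unit) =
        (tw (List.replicate (2 ^ k) ()) : Word ℕ Unit) := by simp [sent, tw]
    rwa [e3]

/-- the canonical depth-first derivation -/
theorem Gk_df_exists (k : ℕ) :
    DFCtrlFrom (Gk k) ⊤ [Sum.inl k] (cw k) (tw (List.replicate (2 ^ k) ())) := by
  obtain ⟨js, mid, hlen, hstrip, hdf⟩ :=
    cw_build (k := k) k le_rfl 0 0 [] [] le_rfl (by simp) (by simp)
  refine ⟨js, [] ++ mid ++ [], hlen, hdf, by simpa using hstrip⟩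

/-- Uniqueness of the depth-first control word. -/
theorem Gk_df_unique {k : ℕ} {γ : List (CProd ℕ Unit)} {w : List Unit}
    (h : DFCtrlFrom (Gk k) ⊤ [Sum.inl k] γ (tw w)) : γ = cw k := by
  obtain ⟨js, va, hlen, hdf, hstrip⟩ := h
  obtain ⟨js0, va0, hlen0, hdf0, hstrip0⟩ := Gk_df_exists k
  have hEq : EqIdx ↑(ents (annot [Sum.inl k])) := by
    intro a ha b hb _
    rw [ents_annot_single] at ha hb
    simp only [Multiset.mem_coe, List.mem_singleton] at ha hb
    rw [ha, hb]
  have hB : BddIdx 0 ↑(ents (annot [Sum.inl k])) := by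
    intro a ha
    rw [ents_annot_single] at ha
    simp only [Multiset.mem_coe, List.mem_singleton] at ha
    rw [ha]
  have hv1 : ntCountA va = 0 := by rw [← ntCount_strip, hstrip, ntCount_tw]
  have hv2 : ntCountA va0 = 0 := by rw [← ntCount_strip, hstrip0, ntCount_tw]
  have := df_unique hdf hdf0 rfl hEq hB hv1 hv2
  rw [List.map_fst_zip (by omega : γ.length ≤ js.length),
    List.map_fst_zip (by omega : (cw k).length ≤ js0.length)] at this
  exact this

theorem cw_length_ge (k : ℕ) : 2 ^ k ≤ (cw k).length := by
  have h1 := cw_length k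
  have h2 : (2 : ℕ) ^ (k + 1) = 2 * 2 ^ k := by ring
  have h3 : 1 ≤ (2 : ℕ) ^ k := Nat.one_le_two_pow
  omega
end Paper
namespace Paper

/-- facts about the grammar `G_k`: (1) `L_{X_k}(G_k) = {a^{2^k}}`;
(2) there is exactly one control word of a depth-first derivation of `a^{2^k}` from
`X_k`, of length at least `2^k`; (3) every depth-first derivation of `a^{2^k}` from
`X_k` has index exactly `k+1`. -/
theorem Gk_properties (k : ℕ) (hk : 0 < k) :
    Lang (Gk k) k = {List.replicate (2 ^ k) ()} ∧
    (∃ γ : List (CProd ℕ Unit),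
      DFCtrlFrom (Gk k) ⊤ [Sum.inl k] γ (tw (List.replicate (2 ^ k) ())) ∧
      2 ^ k ≤ γ.length ∧
      ∀ γ' : List (CProd ℕ Unit),
        DFCtrlFrom (Gk k) ⊤ [Sum.inl k] γ' (tw (List.replicate (2 ^ k) ())) → γ' = γ) ∧
    (∀ (γ : List (CProd ℕ Unit)) (js : List ℕ) (va : AWord ℕ Unit),
      js.length = γ.length →
      DFSeq (Gk k) ⊤ 0 (annot [Sum.inl k]) (γ.zip js) va →
      strip va = tw (List.replicate (2 ^ k) ()) →
      DFSeq (Gk k) ((k : ℕ∞) + 1) 0 (annot [Sum.inl k]) (γ.zip js) va ∧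
      ¬ DFSeq (Gk k) (k : ℕ∞) 0 (annot [Sum.inl k]) (γ.zip js) va) := by
  refine ⟨Gk_lang k, ⟨cw k, Gk_df_exists k, cw_length_ge k,
    fun γ' h => Gk_df_unique h⟩, ?_⟩
  intro γ js va hlen hdf hstrip
  have hγ : γ = cw k := Gk_df_unique ⟨js, va, hlen, hdf, hstrip⟩
  subst hγ
  have hlen' : js.length = (cw k).length := hlen
  have h1 : ntCountA (annot ([Sum.inl k] : Word ℕ Unit)) = 1 := rfl
  constructor
  · obtain ⟨hup, _⟩ := cw_upgrade k hlen' hdf (by omega)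
    have e : ((k + 1 : ℕ) : ℕ∞) = (k : ℕ∞) + 1 := by push_cast; ring
    rwa [e] at hup
  · intro hbad
    have hlow := cw_lower k hlen' hbad
    rw [h1] at hlow
    exact absurd (Nat.cast_le.1 hlow) (by omega)

end Paper
end

section
/- Let G = (Ξ, Σ, Δ) be a grammar in 2-normal form, b = w_1* … w_d* a bounded expression over Σ, and let G^∩, G^⋈ and the map ι : Δ^∩ → Δ^⋈ be as defined. For each production p ∈ Δ^⋈, the preimage ι^{−1}(p) ⊆ Δ^∩ is a singleton. -/
namespace Paper

section Aux

variable {N T : Type}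

/-- explicit runs of the automaton `G^b` -/
inductive RunB (ws : List (List T)) : QB → List T → QB → Prop
  | refl (q : QB) : RunB ws q [] q
  | step {q m q' : QB} {a : T} {w : List T} :
      (((q, [Sum.inr a, Sum.inl m]) : CProd QB T) ∈ DeltaB ws) →
      RunB ws m w q' → RunB ws q (a :: w) q'

lemma ksec_tw {ws : List (List T)} : ∀ {u0 : Word QB T} {γjs v}, KSeq (GB ws) ⊤ u0 γjs v →
    ∀ u : List T, u0 = tw u → v = u0 := by
  intro u0 γjs v h
  induction h with
  | refl => intro _ _; rfl
  | @step u1 v1 p j rest hcnt hmem hget hrest ih =>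
    intro u hu
    subst hu
    exfalso
    rw [show (tw u : Word QB T) = u.map Sum.inr from rfl, List.getElem?_map] at hget
    cases hx : u[j]? <;> simp [hx] at hget

lemma get_tw_inl {u : List T} {q x : QB} {j : ℕ}
    (h : ((tw u ++ [Sum.inl q] : Word QB T))[j]? = some (Sum.inl x)) :
    j = u.length ∧ x = q := by
  have hlen : (tw u : Word QB T).length = u.length := by simp [tw]
  rcases lt_trichotomy j u.length with hj | hj | hj
  · rw [List.getElem?_append_left (by omega)] at h
    rw [show (tw u : Word QB T) = u.map Sum.inr from rfl, List.getElem?_map] at h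
    cases hx : u[j]? <;> simp [hx] at h
  · subst hj
    rw [List.getElem?_append_right (by omega)] at h
    rw [hlen] at h
    simp at h
    exact ⟨rfl, h.symm⟩
  · exfalso
    rw [List.getElem?_eq_none_iff.2 (by simp [hlen]; omega)] at h
    simp at h

lemma ksec_run {ws : List (List T)} : ∀ {u0 : Word QB T} {γjs v}, KSeq (GB ws) ⊤ u0 γjs v →
    ∀ (u : List T) (q : QB) (w : List T) (q' : QB),
      u0 = tw u ++ [Sum.inl q] → v = tw w ++ [Sum.inl q'] →
      ∃ w'', w = u ++ w'' ∧ RunB ws q w'' q' := by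
  intro u0 γjs v h
  induction h with
  | refl u1 _ =>
    intro u q w q' h1 h2
    subst h1
    have h3 := List.append_inj' h2 rfl
    have hu : u = w := by
      have := h3.1
      exact List.map_injective_iff.2 Sum.inr_injective this
    have hq : q = q' := by
      have := h3.2
      simpa using this
    exact ⟨[], by simp [hu], hq ▸ RunB.refl q⟩
  | @step u1 v1 p j rest hcnt hmem hget hrest ih =>
    intro u q w q' h1 h2
    subst h1
    obtain ⟨hj, hx⟩ := get_tw_inl hget
    have hlen : (tw u : Word QB T).length = u.length := by simp [tw]
    have htake : (tw u ++ [Sum.inl q] : Word QB T).take j = tw u := by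
      rw [hj, ← hlen, List.take_left]
    have hdrop : (tw u ++ [Sum.inl q] : Word QB T).drop (j + 1) = [] := by
      apply List.drop_eq_nil_of_le
      simp [hlen]; omega
    rcases hmem with ⟨s, i, a, hs, hi, hl, he⟩ | ⟨s, s', a, hss, hs', hl, he⟩ | ⟨s, hs, he⟩
    · -- advance within block
      have hq : q = (s, i) := by rw [← hx, he]
      have happ : applyProd p j (tw u ++ [Sum.inl q]) =
          tw (u ++ [a]) ++ [Sum.inl ((s, i + 1) : QB)] := by
        rw [applyProd, htake, hdrop, he]
        simp [tw]
      obtain ⟨w'', hw, hr⟩ := ih (u ++ [a]) (s, i + 1) w q' happ h2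
      refine ⟨a :: w'', by simp [hw], ?_⟩
      rw [hq]
      exact RunB.step (Or.inl ⟨s, i, a, hs, hi, hl, rfl⟩) hr
    · -- wrap to a new block
      have hq : q = (s, lenB ws s - 1) := by rw [← hx, he]
      have happ : applyProd p j (tw u ++ [Sum.inl q]) =
          tw (u ++ [a]) ++ [Sum.inl ((s', 0) : QB)] := by
        rw [applyProd, htake, hdrop, he]
        simp [tw]
      obtain ⟨w'', hw, hr⟩ := ih (u ++ [a]) (s', 0) w q' happ h2
      refine ⟨a :: w'', by simp [hw], ?_⟩
      rw [hq]
      exact RunB.step (Or.inr (Or.inl ⟨s, s', a, hss, hs', hl, rfl⟩)) hr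
    · -- ε-production
      exfalso
      have happ : applyProd p j (tw u ++ [Sum.inl q]) = tw u := by
        rw [applyProd, htake, hdrop, he]
        simp
      have hv := ksec_tw hrest u happ
      rw [happ, h2] at hv
      have hmem2 : (Sum.inl q' : QB ⊕ T) ∈ (tw u : Word QB T) := by
        rw [← hv]; simp
      obtain ⟨t, _, ht⟩ := List.mem_map.1 hmem2
      simp at ht

lemma derB_run {ws : List (List T)} {q q' : QB} {w : List T} (h : DerB ws q w q') :
    RunB ws q w q' := by
  obtain ⟨γ, js, hlen, hk⟩ := h
  obtain ⟨w'', hw, hr⟩ := ksec_run hk [] q w q' (by simp [tw]) rfl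
  simpa [hw] using hr

lemma deltaB_pair {ws : List (List T)} {q m : QB} {a : T}
    (h : ((q, [Sum.inr a, Sum.inl m]) : CProd QB T) ∈ DeltaB ws) :
    letterB ws q.1 q.2 = some a ∧
      ((q.2 + 1 < lenB ws q.1 ∧ m = (q.1, q.2 + 1)) ∨
       (q.2 = lenB ws q.1 - 1 ∧ m.2 = 0)) := by
  rcases h with ⟨s, i, a', hs, hi, hl, he⟩ | ⟨s, s', a', hss, hs', hl, he⟩ | ⟨s, hs, he⟩
  · obtain ⟨h1, h2⟩ := Prod.mk.injEq .. ▸ he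
    obtain ⟨ha, hm⟩ : a = a' ∧ m = (s, i + 1) := by
      simpa using h2
    subst h1; subst ha; subst hm
    exact ⟨hl, Or.inl ⟨hi, rfl⟩⟩
  · obtain ⟨h1, h2⟩ := Prod.mk.injEq .. ▸ he
    obtain ⟨ha, hm⟩ : a = a' ∧ m = (s', 0) := by
      simpa using h2
    subst h1; subst ha; subst hm
    exact ⟨hl, Or.inr ⟨rfl, rfl⟩⟩
  · exfalso
    have := (Prod.mk.injEq .. ▸ he).2
    simp at this

/-- the seven possible shapes of right-hand sides of productions of `G^∩`
with head `[q X q']`, refined using 2NF -/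
def ShapeD (ws : List (List T)) (q q' : QB) (r : Word (NI N) T) : Prop :=
  (r = [] ∧ q = q') ∨
  (∃ a : T, r = [Sum.inr a] ∧ ((q, [Sum.inr a, Sum.inl q']) : CProd QB T) ∈ DeltaB ws) ∨
  (∃ (a b : T) (m : QB), r = [Sum.inr a, Sum.inr b] ∧
      ((q, [Sum.inr a, Sum.inl m]) : CProd QB T) ∈ DeltaB ws ∧
      ((m, [Sum.inr b, Sum.inl q']) : CProd QB T) ∈ DeltaB ws) ∨
  (∃ Y : N, r = [Sum.inl ((q, Y, q') : NI N)]) ∨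
  (∃ (a : T) (Y : N) (m : QB), r = [Sum.inr a, Sum.inl ((m, Y, q') : NI N)] ∧
      ((q, [Sum.inr a, Sum.inl m]) : CProd QB T) ∈ DeltaB ws) ∨
  (∃ (a : T) (Y : N) (m : QB), r = [Sum.inl ((q, Y, m) : NI N), Sum.inr a] ∧
      ((m, [Sum.inr a, Sum.inl q']) : CProd QB T) ∈ DeltaB ws) ∨
  (∃ (Y Z : N) (m : QB), r = [Sum.inl ((q, Y, m) : NI N), Sum.inl ((m, Z, q') : NI N)])

lemma shape_of_mem {G : CFG N T} (h2NF : TwoNF G) {ws : List (List T)}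
    {p : CProd (NI N) T} (hp : p ∈ DeltaI G ws) :
    ∃ q X q', p.1 = ((q, X, q') : NI N) ∧ ShapeD ws q q' p.2 := by
  obtain ⟨q, q', X, hv, hc⟩ := hp
  refine ⟨q, X, q', ?_, ?_⟩
  · rcases hc with ⟨w, _, _, he⟩ | ⟨Y, _, he⟩ | ⟨a, Y, m, _, _, _, he⟩ |
      ⟨a, Y, m, _, _, _, he⟩ | ⟨Y, Z, m, _, _, _, he⟩ <;> rw [he]
  · rcases hc with ⟨w, hG, hD, he⟩ | ⟨Y, _, he⟩ | ⟨a, Y, m, _, hB, _, he⟩ |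
      ⟨a, Y, m, _, hB, _, he⟩ | ⟨Y, Z, m, _, _, _, he⟩
    · rw [he]
      have hlen : w.length ≤ 2 := by
        have := h2NF _ hG
        simpa [tw] using this
      have hr := derB_run hD
      match w, hr with
      | [], hr => cases hr with
        | refl => exact Or.inl ⟨rfl, rfl⟩
      | [a], hr =>
        cases hr with
        | step hB hr' =>
          cases hr' with
          | refl => exact Or.inr (Or.inl ⟨a, rfl, hB⟩)
      | [a, b], hr =>
        cases hr with
        | @step _ m _ _ _ hB hr' =>
          cases hr' with
          | @step _ m2 _ _ _ hB2 hr'' =>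
            cases hr'' with
            | refl => exact Or.inr (Or.inr (Or.inl ⟨a, b, m, rfl, hB, hB2⟩))
      | a :: b :: c :: w', hr => simp at hlen
    · rw [he]; exact Or.inr (Or.inr (Or.inr (Or.inl ⟨Y, rfl⟩)))
    · rw [he]; exact Or.inr (Or.inr (Or.inr (Or.inr (Or.inl ⟨a, Y, m, rfl, hB⟩))))
    · rw [he]; exact Or.inr (Or.inr (Or.inr (Or.inr (Or.inr (Or.inl ⟨a, Y, m, rfl, hB⟩)))))
    · rw [he]; exact Or.inr (Or.inr (Or.inr (Or.inr (Or.inr (Or.inr ⟨Y, Z, m, rfl⟩)))))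

variable {ws : List (List T)}

lemma iR_nil (h : NI N) : iotaRhs ws h ([] : Word (NI N) T) = [] := rfl

lemma iR_t1 (h : NI N) (a : T) :
    iotaRhs ws h [Sum.inr a] = if h.2.2.2 = 0 then [Sum.inr h.1.1] else [] := rfl

lemma iR_t2 (h : NI N) (a b : T) :
    iotaRhs ws h [Sum.inr a, Sum.inr b] =
      (if (iotaMid ws h a b).2 = 0 then [Sum.inr h.1.1] else []) ++
      (if h.2.2.2 = 0 then [Sum.inr (iotaMid ws h a b).1] else []) := rfl

lemma iR_L (h : NI N) (a : T) (m : NI N) :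
    iotaRhs ws h [Sum.inr a, Sum.inl m] =
      (if m.1.2 = 0 then [Sum.inr h.1.1] else []) ++ [Sum.inl m] := rfl

lemma iR_R (h : NI N) (a : T) (m : NI N) :
    iotaRhs ws h [Sum.inl m, Sum.inr a] =
      [Sum.inl m] ++ (if h.2.2.2 = 0 then [Sum.inr m.2.2.1] else []) := rfl

lemma iR_C (h : NI N) (m : NI N) :
    iotaRhs ws h [Sum.inl m] = [Sum.inl m] := rfl

lemma iR_B (h : NI N) (m m' : NI N) :
    iotaRhs ws h [Sum.inl m, Sum.inl m'] = [Sum.inl m, Sum.inl m'] := rfl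

lemma iotaMid_lt {h : NI N} (hlt : h.1.2 + 1 < lenB ws h.1.1) (a b : T) :
    iotaMid ws h a b = (h.1.1, h.1.2 + 1) := if_pos hlt

lemma iotaMid_ge {h : NI N} (hge : ¬ h.1.2 + 1 < lenB ws h.1.1) (a b : T) :
    iotaMid ws h a b =
      (sInf {y : ℕ |
        (((h.1.1, h.1.2), [Sum.inr a, Sum.inl ((y, 0) : QB)]) : CProd QB T) ∈ DeltaB ws ∧
        ((((y, 0) : QB), [Sum.inr b, Sum.inl (h.2.2 : QB)]) : CProd QB T) ∈ DeltaB ws}, 0) :=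
  if_neg hge

lemma db_self {x : QB} {a : T}
    (d : ((x, [Sum.inr a, Sum.inl x]) : CProd QB T) ∈ DeltaB ws) : x.2 = 0 := by
  rcases (deltaB_pair d).2 with ⟨_, hm⟩ | ⟨_, hm⟩
  · have h := congrArg Prod.snd hm; simp at h
  · exact hm

lemma db_letter_eq {x m m' : QB} {a b : T}
    (d1 : ((x, [Sum.inr a, Sum.inl m]) : CProd QB T) ∈ DeltaB ws)
    (d2 : ((x, [Sum.inr b, Sum.inl m']) : CProd QB T) ∈ DeltaB ws) : a = b :=
  Option.some.inj ((deltaB_pair d1).1.symm.trans (deltaB_pair d2).1)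

lemma db_lt {x m : QB} {a : T}
    (d : ((x, [Sum.inr a, Sum.inl m]) : CProd QB T) ∈ DeltaB ws)
    (hlt : x.2 + 1 < lenB ws x.1) : m = (x.1, x.2 + 1) := by
  rcases (deltaB_pair d).2 with ⟨_, hm⟩ | ⟨hx, _⟩
  · exact hm
  · omega

lemma db_wrap {x m : QB} {a : T}
    (d : ((x, [Sum.inr a, Sum.inl m]) : CProd QB T) ∈ DeltaB ws)
    (hge : ¬ x.2 + 1 < lenB ws x.1) : m.2 = 0 := by
  rcases (deltaB_pair d).2 with ⟨h, _⟩ | ⟨_, hm⟩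
  · omega
  · exact hm

lemma mid_ne_zero {q q' : QB} {X : N} {a b : T}
    (h : (iotaMid ws ((q, X, q') : NI N) a b).2 ≠ 0) :
    q.2 + 1 < lenB ws q.1 ∧ iotaMid ws ((q, X, q') : NI N) a b = (q.1, q.2 + 1) := by
  by_cases hlt : q.2 + 1 < lenB ws q.1
  · exact ⟨hlt, iotaMid_lt hlt a b⟩
  · exfalso
    rw [iotaMid_ge hlt a b] at h
    simp at h

lemma sInf_step {S : Set ℕ} {y : ℕ} (hy : y ∈ S) : sInf S ∈ S := Nat.sInf_mem ⟨y, hy⟩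

lemma shapeD_inj {q q' : QB} {X : N} {r1 r2 : Word (NI N) T}
    (h1 : ShapeD ws q q' r1) (h2 : ShapeD ws q q' r2)
    (he : iotaRhs ws ((q, X, q') : NI N) r1 = iotaRhs ws ((q, X, q') : NI N) r2) :
    r1 = r2 := by
  rcases h1 with ⟨e1, hqq1⟩ | ⟨a1, e1, d1⟩ | ⟨a1, b1, m1, e1, d1, d1'⟩ | ⟨Y1, e1⟩ |
      ⟨a1, Y1, m1, e1, d1⟩ | ⟨a1, Y1, m1, e1, d1⟩ | ⟨Y1, Z1, m1, e1⟩ <;>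
    rcases h2 with ⟨e2, hqq2⟩ | ⟨a2, e2, d2⟩ | ⟨a2, b2, m2, e2, d2, d2'⟩ | ⟨Y2, e2⟩ |
      ⟨a2, Y2, m2, e2, d2⟩ | ⟨a2, Y2, m2, e2, d2⟩ | ⟨Y2, Z2, m2, e2⟩ <;>
    subst e1 <;> subst e2 <;>
    simp only [iR_nil, iR_t1, iR_t2, iR_L, iR_R, iR_C, iR_B] at he
  all_goals try (split_ifs at he <;> simp_all)
  all_goals try simp_all
  -- 1 : T0 × T1
  · rename_i hc
    exact hc (db_self d2)
  -- 2 : T0 × T2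
  · rename_i hc1 hc2
    obtain ⟨hlt, _⟩ := mid_ne_zero hc1
    have hm2 := db_lt d2 hlt
    rcases (deltaB_pair d2').2 with ⟨_, hm⟩ | ⟨_, h0⟩
    · rw [hm2] at hm
      have h1 := congrArg Prod.snd hm
      simp at h1
      omega
    · exact hc2 h0
  -- 3 : T1 × T0
  · rename_i hc
    exact hc (db_self d1)
  -- 4 : T1 × T1
  · exact db_letter_eq d1 d2
  -- 5 : T1 × T2 (kept)
  · rename_i h1 h2
    obtain ⟨hlt, _⟩ := mid_ne_zero h2
    rcases (deltaB_pair d1).2 with ⟨_, hm⟩ | ⟨hx, _⟩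
    · have h3 := congrArg Prod.snd hm
      simp at h3
      omega
    · omega
  -- 6 : T1 × T2 (dropped)
  · rename_i h1 h2
    obtain ⟨hlt, _⟩ := mid_ne_zero h2
    have hm2 := db_lt d2 hlt
    have hq' := db_lt d1 hlt
    rcases (deltaB_pair d2').2 with ⟨_, hm⟩ | ⟨_, h0⟩
    · rw [hm2] at hm
      have h3 := congrArg Prod.snd (hq'.symm.trans hm)
      simp at h3
    · exact h1 h0
  -- 7 : T2 × T0
  · rename_i hc1 hc2
    obtain ⟨hlt, _⟩ := mid_ne_zero hc1
    have hm1 := db_lt d1 hlt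
    rcases (deltaB_pair d1').2 with ⟨_, hm⟩ | ⟨_, h0⟩
    · rw [hm1] at hm
      have h1 := congrArg Prod.snd hm
      simp at h1
      omega
    · exact hc2 h0
  -- 8 : T2 × T1 (kept)
  · rename_i h1 h2
    obtain ⟨hlt, _⟩ := mid_ne_zero h1
    rcases (deltaB_pair d2).2 with ⟨_, hm⟩ | ⟨hx, _⟩
    · have h3 := congrArg Prod.snd hm
      simp at h3
      omega
    · omega
  -- 9 : T2 × T1 (dropped)
  · rename_i h1 h2
    obtain ⟨hlt, _⟩ := mid_ne_zero h1
    have hm1 := db_lt d1 hlt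
    have hq' := db_lt d2 hlt
    rcases (deltaB_pair d1').2 with ⟨_, hm⟩ | ⟨_, h0⟩
    · rw [hm1] at hm
      have h3 := congrArg Prod.snd (hq'.symm.trans hm)
      simp at h3
    · exact h2 h0
  -- 10 : T2 × T2 (wrap, q'.2 = 0)
  · rename_i h1 h2 h3
    refine ⟨db_letter_eq d1 d2, ?_⟩
    by_cases hlt : q.2 + 1 < lenB ws q.1
    · exfalso
      rw [iotaMid_lt hlt a1 b1] at h1
      simp at h1
    · rw [iotaMid_ge hlt a1 b1, iotaMid_ge hlt a2 b2] at he
      simp only at he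
      have h10 := db_wrap d1 hlt
      have h20 := db_wrap d2 hlt
      have e1 : ((m1.1, 0) : QB) = m1 := by rw [← h10]
      have e2 : ((m2.1, 0) : QB) = m2 := by rw [← h20]
      have hk1 := sInf_step (y := m1.1)
        (S := {y : ℕ | (((q, [Sum.inr a1, Sum.inl ((y, 0) : QB)]) : CProd QB T) ∈ DeltaB ws ∧
          ((((y, 0) : QB), [Sum.inr b1, Sum.inl q']) : CProd QB T) ∈ DeltaB ws)})
        ⟨by rw [e1]; exact d1, by rw [e1]; exact d1'⟩
      have hk2 := sInf_step (y := m2.1)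
        (S := {y : ℕ | (((q, [Sum.inr a2, Sum.inl ((y, 0) : QB)]) : CProd QB T) ∈ DeltaB ws ∧
          ((((y, 0) : QB), [Sum.inr b2, Sum.inl q']) : CProd QB T) ∈ DeltaB ws)})
        ⟨by rw [e2]; exact d2, by rw [e2]; exact d2'⟩
      have dd1 := hk1.2
      have dd2 := hk2.2
      rw [← he] at dd2
      exact db_letter_eq dd1 dd2
  -- 11 : T2 × T2 (wrap, q'.2 ≠ 0)
  · rename_i h1 h2 h3
    refine ⟨db_letter_eq d1 d2, ?_⟩
    by_cases hlt : q.2 + 1 < lenB ws q.1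
    · exfalso
      rw [iotaMid_lt hlt a1 b1] at h1
      simp at h1
    · have h10 := db_wrap d1 hlt
      have h20 := db_wrap d2 hlt
      rcases (deltaB_pair d1').2 with ⟨_, hq1⟩ | ⟨_, h0⟩
      · rcases (deltaB_pair d2').2 with ⟨_, hq2⟩ | ⟨_, h0⟩
        · have hm : m1 = m2 := by
            have := congrArg Prod.fst (hq1.symm.trans hq2)
            simp at this
            exact Prod.ext this (by omega)
          exact db_letter_eq (hm ▸ d1') d2'
        · exact absurd h0 h2
      · exact absurd h0 h2
  -- 12 : T2 × T2 (lt, with he)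
  · rename_i h1 h2 h3
    refine ⟨db_letter_eq d1 d2, ?_⟩
    obtain ⟨hlt, _⟩ := mid_ne_zero h1
    have hm1 := db_lt d1 hlt
    have hm2 := db_lt d2 hlt
    rw [hm1] at d1'
    rw [hm2] at d2'
    exact db_letter_eq d1' d2'
  -- 13 : T2 × T2 (lt, no he)
  · rename_i h1 h2 h3
    refine ⟨db_letter_eq d1 d2, ?_⟩
    obtain ⟨hlt, _⟩ := mid_ne_zero h1
    have hm1 := db_lt d1 hlt
    have hm2 := db_lt d2 hlt
    rw [hm1] at d1'
    rw [hm2] at d2'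
    exact db_letter_eq d1' d2'
  -- 14 : C × L
  · rename_i hc
    exact hc (db_self d2)
  -- 15 : C × R
  · rename_i hc
    exact hc (db_self d2)
  -- 16 : L × C
  · rename_i hc
    exact hc (db_self d1)
  -- 17 : L × L (kept)
  · exact db_letter_eq d1 d2
  -- 18 : L × L (dropped)
  · exact db_letter_eq d1 d2
  -- 19 : L × R
  · rename_i hc1 hc2
    exact hc1 (db_self d1)
  -- 20 : R × C
  · rename_i hc
    exact hc (db_self d1)
  -- 21 : R × L
  · rename_i hc1 hc2
    exact hc2 (db_self d2)
  -- 22 : R × R (kept)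
  · exact db_letter_eq d1 d2
  -- 23 : R × R (dropped)
  · exact db_letter_eq d1 d2

end Aux

/-- Proposition 1: for each production `p ∈ Δ^⋈`, the preimage
`ι⁻¹(p) ⊆ Δ^∩` is a singleton. -/
theorem iota_preimage_singleton {N T : Type} (G : CFG N T) (h2NF : TwoNF G)
    (ws : List (List T)) (hb : IsBExpr ws)
    (p : CProd (NI N) ℕ) (hp : p ∈ (GBow G ws).prods) :
    ∃! p' : CProd (NI N) T, p' ∈ DeltaI G ws ∧ iota ws p' = p := by
  obtain ⟨p0, hp0, hip⟩ := hp
  refine ⟨p0, ⟨hp0, hip⟩, ?_⟩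
  rintro p1 ⟨hp1, hip1⟩
  have he : iota ws p1 = iota ws p0 := hip1.trans hip.symm
  obtain ⟨q1, X1, q1', hh1, hs1⟩ := shape_of_mem h2NF hp1
  obtain ⟨q0, X0, q0', hh0, hs0⟩ := shape_of_mem h2NF hp0
  have hfst : p1.1 = p0.1 := by
    have h := congrArg Prod.fst he
    simpa [iota] using h
  have hfst' : ((q1, X1, q1') : NI N) = (q0, X0, q0') := by rw [← hh1, ← hh0]; exact hfst
  obtain ⟨e1, e2, e3⟩ : q1 = q0 ∧ X1 = X0 ∧ q1' = q0' := by
    simpa [Prod.ext_iff] using hfst'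
  subst e1; subst e2; subst e3
  have hsnd : iotaRhs ws p1.1 p1.2 = iotaRhs ws p0.1 p0.2 := by
    have h := congrArg Prod.snd he
    simpa [iota] using h
  rw [hh1, hh0] at hsnd
  have h2 := shapeD_inj hs1 hs0 hsnd
  exact Prod.ext hfst h2

end Paper
end
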